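/- Let U and V be strings, each with d-period ρ where ρ ≤ |U| and ρ ≤ |V|. Then ρ is a (2d + ρ)-period of the concatenation U·V. -/

import Mathlib

open Function

/-- Hamming distance between (prefixes of) lists: number of aligned mismatches. -/
def hamL {α : Type*} [DecidableEq α] (A B : List α) : ℕ :=
  ((List.range A.length).filter (fun i => A[i]? ≠ B[i]?)).length

/-- Substring T[a .. b] (inclusive) with integer indices. -/
def substr {α : Type*} (T : List α) (a b : ℤ) : List α :=
  (T.drop a.toNat).take (b - a + 1).toNat

/-- Characteristic function of a string and a character. -/
def charFn {α : Type*} [DecidableEq α] (X : List α) (c : α) : ℤ → ℤ :=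
  fun i => if 0 ≤ i ∧ X[i.toNat]? = some c then 1 else 0

/-- Convolution of two (finitely supported) functions ℤ → ℤ. -/
noncomputable def conv (f g : ℤ → ℤ) : ℤ → ℤ := fun i => ∑ᶠ j : ℤ, f j * g (i - j)

/-- Cross-correlation of two strings. -/
noncomputable def cross {α : Type*} [Fintype α] [DecidableEq α] (X Y : List α) : ℤ → ℤ :=
  fun i => ∑ c : α, conv (charFn X c) (charFn Y.reverse c) i

/-- Backward difference of `f` due to `ρ`. -/
def bdiff (ρ : ℤ) (f : ℤ → ℤ) : ℤ → ℤ := fun i => f i - f (i - ρ)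

/-- `ρ` is a `d`-period of `X`: HAM(X[0..n-ρ-1], X[ρ..n-1]) ≤ d. -/
def isPeriodL {α : Type*} [DecidableEq α] (X : List α) (ρ d : ℕ) : Prop :=
  hamL (X.take (X.length - ρ)) (X.drop ρ) ≤ d

lemma hamL_card {α : Type*} [DecidableEq α] (A B : List α) :
    hamL A B = ((Finset.range A.length).filter (fun i => A[i]? ≠ B[i]?)).card := rfl

lemma ham_shift {α : Type*} [DecidableEq α] (X : List α) (ρ : ℕ) :
    hamL (X.take (X.length - ρ)) (X.drop ρ)
      = ((Finset.range (X.length - ρ)).filter (fun i => X[i]? ≠ X[i+ρ]?)).card := by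
  rw [hamL_card]
  have hl : (X.take (X.length - ρ)).length = X.length - ρ := by
    simp [List.length_take]
  rw [hl]
  apply Finset.card_nbij id
  · intro i hi
    simp only [Finset.mem_coe, Finset.mem_filter, Finset.mem_range] at hi ⊢
    obtain ⟨h1, h2⟩ := hi
    refine ⟨h1, ?_⟩
    rwa [List.getElem?_take, if_pos h1, List.getElem?_drop, Nat.add_comm] at h2
  · intro a _ b _ hab; exact hab
  · intro i hi
    simp only [Finset.coe_filter, Set.mem_setOf_eq, Finset.mem_range, Set.mem_image] at hi ⊢
    refine ⟨i, ⟨hi.1, ?_⟩, rfl⟩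
    rw [List.getElem?_take, if_pos hi.1, List.getElem?_drop, Nat.add_comm]
    exact hi.2

theorem stmt10 {α : Type*} [DecidableEq α]
    (U V : List α) (ρ d : ℕ) (hρ : 0 < ρ)
    (hU : ρ ≤ U.length) (hV : ρ ≤ V.length)
    (hpU : isPeriodL U ρ d) (hpV : isPeriodL V ρ d) :
    isPeriodL (U ++ V) ρ (2 * d + ρ) := by
  unfold isPeriodL at *
  rw [ham_shift] at hpU hpV ⊢
  set m := U.length with hm
  set k := V.length with hk
  have hlen : (U ++ V).length = m + k := by simp [hm, hk]
  rw [hlen]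
  set W := U ++ V with hW
  set S := (Finset.range (m + k - ρ)).filter (fun i => W[i]? ≠ W[i+ρ]?) with hS
  have hsplit : S ⊆ (S.filter (fun i => i < m - ρ)) ∪ (S.filter (fun i => m - ρ ≤ i ∧ i < m))
      ∪ (S.filter (fun i => m ≤ i)) := by
    intro i hi
    simp only [Finset.mem_union, Finset.mem_filter]
    rcases lt_or_ge i (m - ρ) with h | h
    · exact Or.inl (Or.inl ⟨hi, h⟩)
    · rcases lt_or_ge i m with h2 | h2
      · exact Or.inl (Or.inr ⟨hi, h, h2⟩)
      · exact Or.inr ⟨hi, h2⟩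
  have c1 : (S.filter (fun i => i < m - ρ)).card ≤ d := by
    refine le_trans (Finset.card_le_card ?_) hpU
    intro i hi
    rw [Finset.mem_filter] at hi
    obtain ⟨hiS, h3⟩ := hi
    rw [hS, Finset.mem_filter, Finset.mem_range] at hiS
    obtain ⟨h1, h2⟩ := hiS
    rw [Finset.mem_filter, Finset.mem_range]
    refine ⟨h3, ?_⟩
    rwa [List.getElem?_append, if_pos (by omega), List.getElem?_append, if_pos (by omega)] at h2
  have c2 : (S.filter (fun i => m - ρ ≤ i ∧ i < m)).card ≤ ρ := by
    calc (S.filter (fun i => m - ρ ≤ i ∧ i < m)).card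
        ≤ (Finset.Ico (m - ρ) m).card := by
          apply Finset.card_le_card
          intro i hi
          simp only [Finset.mem_filter] at hi
          simp [Finset.mem_Ico, hi.2.1, hi.2.2]
      _ = ρ := by rw [Nat.card_Ico]; omega
  have c3 : (S.filter (fun i => m ≤ i)).card ≤ d := by
    refine le_trans ?_ hpV
    apply Finset.card_le_card_of_injOn (fun i => i - m)
    · intro i hi
      rw [Finset.mem_coe, Finset.mem_filter] at hi
      obtain ⟨hiS, h3⟩ := hi
      rw [hS, Finset.mem_filter, Finset.mem_range] at hiS
      obtain ⟨h1, h2⟩ := hiS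
      rw [Finset.mem_coe, Finset.mem_filter, Finset.mem_range]
      refine ⟨by beta_reduce; omega, ?_⟩
      rw [List.getElem?_append, if_neg (by omega), List.getElem?_append, if_neg (by omega)] at h2
      have : i + ρ - m = i - m + ρ := by omega
      rwa [this] at h2
    · intro a ha b hb hab
      simp only at hab
      rw [Finset.mem_coe, Finset.mem_filter] at ha hb
      have h1 := ha.2
      have h2 := hb.2
      omega
  calc S.card ≤ _ := Finset.card_le_card hsplit
    _ ≤ (S.filter (fun i => i < m - ρ)).card + (S.filter (fun i => m - ρ ≤ i ∧ i < m)).card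
        + (S.filter (fun i => m ≤ i)).card := by
        refine le_trans (Finset.card_union_le _ _) ?_
        exact Nat.add_le_add_right (Finset.card_union_le _ _) _
    _ ≤ d + ρ + d := by omega
    _ ≤ 2 * d + ρ := by omega
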